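/- For any continuously differentiable β, ξ : [0,T] → ℝ, the real function x ↦ ∫₀ᵀ (β_t + x ξ_t) · γ_t(β + x ξ) dt is differentiable at x = 0 and its derivative there equals ∫₀ᵀ ( γ_t(β) − (2β_t/σ_t²)·∫_t^T γ_s(β)² β_s ds ) ξ_t dt. -/

import Mathlib

open MeasureTheory intervalIntegral

/-- Mean-square filtering error `γ_t(β) = σ_v² / (1 + σ_v² ∫₀ᵗ (β_s/σ_s)² ds)`. -/
noncomputable def gammaFn (σv : ℝ) (σ β : ℝ → ℝ) (t : ℝ) : ℝ :=
  σv ^ 2 / (1 + σv ^ 2 * ∫ s in (0:ℝ)..t, (β s / σ s) ^ 2)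

set_option maxHeartbeats 1000000 in
theorem gdg_main
    (T σv : ℝ) (hT : 0 < T) (hσv : 0 < σv)
    (σ β ξ : ℝ → ℝ) (hσ : Continuous σ) (hσpos : ∀ t, 0 < σ t)
    (hβ : Continuous β) (hξ : Continuous ξ) :
    HasDerivAt
      (fun x : ℝ => ∫ t in (0:ℝ)..T,
        (β t + x * ξ t) * gammaFn σv σ (fun s => β s + x * ξ s) t)
      (∫ t in (0:ℝ)..T,
        (gammaFn σv σ β t
          - (2 * β t / (σ t) ^ 2) * ∫ s in t..T, (gammaFn σv σ β s) ^ 2 * β s) * ξ t)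
      0 := by
  have hσne : ∀ t, σ t ≠ 0 := fun t => (hσpos t).ne'
  have ha : Continuous (fun s => (β s / σ s) ^ 2) := ((hβ.div hσ hσne).pow 2)
  have hb : Continuous (fun s => β s * ξ s / (σ s) ^ 2) :=
    ((hβ.mul hξ).div (hσ.pow 2) (fun t => pow_ne_zero 2 (hσne t)))
  have hc : Continuous (fun s => (ξ s / σ s) ^ 2) := ((hξ.div hσ hσne).pow 2)
  -- primitives, as opaque functions
  obtain ⟨A, hAdef⟩ : ∃ A : ℝ → ℝ, A = fun t => ∫ s in (0:ℝ)..t, (β s / σ s) ^ 2 := ⟨_, rfl⟩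
  obtain ⟨B, hBdef⟩ : ∃ B : ℝ → ℝ, B = fun t => ∫ s in (0:ℝ)..t, β s * ξ s / (σ s) ^ 2 := ⟨_, rfl⟩
  obtain ⟨C, hCdef⟩ : ∃ C : ℝ → ℝ, C = fun t => ∫ s in (0:ℝ)..t, (ξ s / σ s) ^ 2 := ⟨_, rfl⟩
  have hAd : ∀ t, HasDerivAt A ((β t / σ t) ^ 2) t := by
    rw [hAdef]
    exact fun t => integral_hasDerivAt_right (ha.intervalIntegrable 0 t)
      (ha.stronglyMeasurableAtFilter _ _) ha.continuousAt
  have hBd : ∀ t, HasDerivAt B (β t * ξ t / (σ t) ^ 2) t := by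
    rw [hBdef]
    exact fun t => integral_hasDerivAt_right (hb.intervalIntegrable 0 t)
      (hb.stronglyMeasurableAtFilter _ _) hb.continuousAt
  have hCd : ∀ t, HasDerivAt C ((ξ t / σ t) ^ 2) t := by
    rw [hCdef]
    exact fun t => integral_hasDerivAt_right (hc.intervalIntegrable 0 t)
      (hc.stronglyMeasurableAtFilter _ _) hc.continuousAt
  have hAc : Continuous A := by
    rw [continuous_iff_continuousAt]; exact fun t => (hAd t).continuousAt
  have hBc : Continuous B := by
    rw [continuous_iff_continuousAt]; exact fun t => (hBd t).continuousAt
  have hCc : Continuous C := by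
    rw [continuous_iff_continuousAt]; exact fun t => (hCd t).continuousAt
  have hB0 : B 0 = 0 := by rw [hBdef]; simp
  -- key quadratic expansion
  have key : ∀ (x t : ℝ),
      (∫ s in (0:ℝ)..t, ((β s + x * ξ s) / σ s) ^ 2)
        = A t + x * (2 * B t) + x ^ 2 * C t := by
    intro x t
    have h1 : ∀ s, ((β s + x * ξ s) / σ s) ^ 2
        = (β s / σ s) ^ 2 + x * (2 * (β s * ξ s / (σ s) ^ 2)) + x ^ 2 * (ξ s / σ s) ^ 2 := by
      intro s
      field_simp
      ring
    rw [hAdef, hBdef, hCdef]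
    calc (∫ s in (0:ℝ)..t, ((β s + x * ξ s) / σ s) ^ 2)
        = ∫ s in (0:ℝ)..t, ((β s / σ s) ^ 2 + x * (2 * (β s * ξ s / (σ s) ^ 2))
            + x ^ 2 * (ξ s / σ s) ^ 2) := by
          exact intervalIntegral.integral_congr (fun s _ => h1 s)
      _ = _ := by
          rw [intervalIntegral.integral_add ((show Continuous fun s => (β s / σ s) ^ 2 + x * (2 * (β s * ξ s / (σ s)^2)) from (ha.add ((continuous_const.mul (continuous_const.mul hb) : Continuous fun s => x * (2 * (β s * ξ s / (σ s)^2)))))).intervalIntegrable 0 t)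
              ((show Continuous fun s => x^2 * (ξ s / σ s)^2 from (continuous_const.mul hc)).intervalIntegrable 0 t),
            intervalIntegral.integral_add (ha.intervalIntegrable 0 t)
              ((show Continuous fun s => x * (2 * (β s * ξ s / (σ s)^2)) from (continuous_const.mul (continuous_const.mul hb))).intervalIntegrable 0 t),
            intervalIntegral.integral_const_mul, intervalIntegral.integral_const_mul,
            intervalIntegral.integral_const_mul]
  -- denominator
  obtain ⟨D, hDdef⟩ : ∃ D : ℝ → ℝ → ℝ,
      D = fun x t => 1 + σv ^ 2 * (A t + x * (2 * B t) + x ^ 2 * C t) := ⟨_, rfl⟩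
  have hD1 : ∀ (x : ℝ), ∀ t ∈ Set.Icc (0:ℝ) T, 1 ≤ D x t := by
    intro x t ht
    have h0 : (0:ℝ) ≤ ∫ s in (0:ℝ)..t, ((β s + x * ξ s) / σ s) ^ 2 :=
      intervalIntegral.integral_nonneg ht.1 (fun s _ => sq_nonneg _)
    rw [key] at h0
    have : 0 ≤ σv ^ 2 * (A t + x * (2 * B t) + x ^ 2 * C t) :=
      mul_nonneg (sq_nonneg _) h0
    rw [hDdef]
    simp only
    linarith
  have hDpos : ∀ (x : ℝ), ∀ t ∈ Set.Icc (0:ℝ) T, 0 < D x t :=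
    fun x t ht => lt_of_lt_of_le one_pos (hD1 x t ht)
  have hDcont : Continuous (fun p : ℝ × ℝ => D p.1 p.2) := by
    rw [hDdef]
    apply continuous_const.add
    apply continuous_const.mul
    exact ((hAc.comp continuous_snd).add
      (continuous_fst.mul (continuous_const.mul (hBc.comp continuous_snd)))).add
      ((continuous_fst.pow 2).mul (hCc.comp continuous_snd))
  have hDd : ∀ (x t : ℝ), HasDerivAt (fun y => D y t) (σv ^ 2 * (2 * B t + x * (2 * C t))) x := by
    intro x t
    rw [hDdef]
    have h1 : HasDerivAt (fun y : ℝ => y * (2 * B t)) (2 * B t) x := by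
      simpa using (hasDerivAt_id x).mul_const (2 * B t)
    have h2 : HasDerivAt (fun y : ℝ => y ^ 2 * C t) (2 * x * C t) x := by
      simpa using (hasDerivAt_pow 2 x).mul_const (C t)
    have h3 : HasDerivAt (fun y : ℝ => A t + y * (2 * B t) + y ^ 2 * C t)
        (2 * B t + 2 * x * C t) x := ((h1.const_add (A t)).add h2)
    have := (h3.const_mul (σv ^ 2)).const_add 1
    exact this.congr_deriv (by ring)
  -- gammaFn in terms of D
  have hgamma : ∀ (x t : ℝ), gammaFn σv σ (fun s => β s + x * ξ s) t = σv ^ 2 / D x t := by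
    intro x t
    rw [hDdef]
    simp only [gammaFn, key]
  have hgamma0 : ∀ t, gammaFn σv σ β t = σv ^ 2 / D 0 t := by
    intro t
    have := hgamma 0 t
    simpa using this
  -- the integrand and its x-derivative
  obtain ⟨F, hFdef⟩ : ∃ F : ℝ → ℝ → ℝ,
      F = fun x t => ((β t + x * ξ t) * σv ^ 2) / D x t := ⟨_, rfl⟩
  obtain ⟨G, hGdef⟩ : ∃ G : ℝ → ℝ → ℝ,
      G = fun x t =>
        (ξ t * σv ^ 2 * D x t
          - (β t + x * ξ t) * σv ^ 2 * (σv ^ 2 * (2 * B t + x * (2 * C t)))) / (D x t) ^ 2 :=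
    ⟨_, rfl⟩
  have hFeq : ∀ (x t : ℝ),
      (β t + x * ξ t) * gammaFn σv σ (fun s => β s + x * ξ s) t = F x t := by
    intro x t
    rw [hgamma, hFdef]
    ring
  have hFderiv : ∀ (x : ℝ), ∀ t ∈ Set.Icc (0:ℝ) T,
      HasDerivAt (fun y => F y t) (G x t) x := by
    intro x t ht
    have hN : HasDerivAt (fun y : ℝ => (β t + y * ξ t) * σv ^ 2) (ξ t * σv ^ 2) x := by
      have : HasDerivAt (fun y : ℝ => β t + y * ξ t) (ξ t) x :=
        (by simpa using (hasDerivAt_id x).mul_const (ξ t) :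
          HasDerivAt (fun y : ℝ => y * ξ t) (ξ t) x).const_add (β t)
      simpa using this.mul_const (σv ^ 2)
    have hdiv := hN.div (hDd x t) (hDpos x t ht).ne'
    rw [hFdef, hGdef]
    exact hdiv
  -- uniform bound for G on [-1,1] x [0,T]
  have hGcont : ContinuousOn (fun p : ℝ × ℝ => G p.1 p.2)
      (Set.Icc (-1:ℝ) 1 ×ˢ Set.Icc (0:ℝ) T) := by
    rw [hGdef]
    apply ContinuousOn.div
    · apply Continuous.continuousOn
      apply Continuous.sub
      · exact ((hξ.comp continuous_snd).mul continuous_const).mul hDcont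
      · exact (((hβ.comp continuous_snd).add
          (continuous_fst.mul (hξ.comp continuous_snd))).mul continuous_const).mul
          (continuous_const.mul ((continuous_const.mul (hBc.comp continuous_snd)).add
            (continuous_fst.mul (continuous_const.mul (hCc.comp continuous_snd)))))
    · exact (hDcont.pow 2).continuousOn
    · intro p hp
      exact pow_ne_zero 2 (hDpos p.1 p.2 hp.2).ne'
  obtain ⟨K, hK⟩ := (IsCompact.exists_bound_of_continuousOn
    ((isCompact_Icc).prod isCompact_Icc) hGcont)
  -- measure
  obtain ⟨μ, hμdef⟩ : ∃ μ : Measure ℝ, μ = volume.restrict (Set.Ioc 0 T) := ⟨_, rfl⟩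
  have hIoc : Set.Ioc (0:ℝ) T ⊆ Set.Icc 0 T := Set.Ioc_subset_Icc_self
  have hGmeas : ∀ x : ℝ, AEStronglyMeasurable (fun t => G x t) μ := by
    intro x
    apply Measurable.aestronglyMeasurable
    have : Measurable (fun t => G x t) := by
      rw [hGdef]
      apply Measurable.div
      · apply Measurable.sub
        · exact ((hξ.measurable.mul measurable_const).mul
            ((hDcont.comp (Continuous.prodMk_right x)).measurable))
        · exact (((hβ.measurable.add (measurable_const.mul hξ.measurable)).mul
            measurable_const).mul (measurable_const.mul
              ((continuous_const.mul hBc).measurable.add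
                (measurable_const.mul (continuous_const.mul hCc).measurable))))
      · exact (((hDcont.comp (Continuous.prodMk_right x)).pow 2).measurable)
    exact this
  have hFmeas : ∀ x : ℝ, AEStronglyMeasurable (fun t => F x t) μ := by
    intro x
    apply Measurable.aestronglyMeasurable
    rw [hFdef]
    exact ((hβ.measurable.add (measurable_const.mul hξ.measurable)).mul
      measurable_const).div ((hDcont.comp (Continuous.prodMk_right x)).measurable)
  have hFint : Integrable (fun t => F 0 t) μ := by
    have hcont : ContinuousOn (fun t => F 0 t) (Set.Icc 0 T) := by
      rw [hFdef]
      apply ContinuousOn.div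
      · exact ((hβ.add (continuous_const.mul hξ)).mul continuous_const).continuousOn
      · exact (hDcont.comp (Continuous.prodMk_right 0)).continuousOn
      · exact fun t ht => (hDpos 0 t ht).ne'
    rw [hμdef]
    exact (hcont.integrableOn_Icc.mono_set hIoc)
  have hμfin : IsFiniteMeasure μ := by
    constructor
    rw [hμdef, Measure.restrict_apply_univ]
    exact measure_Ioc_lt_top
  have hboundint : Integrable (fun _ : ℝ => K) μ := integrable_const K
  have h_bound : ∀ᵐ t ∂μ, ∀ x ∈ Metric.ball (0:ℝ) 1, ‖G x t‖ ≤ K := by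
    rw [hμdef, ae_restrict_iff' measurableSet_Ioc]
    apply ae_of_all
    intro t ht x hx
    have hx1 : x ∈ Set.Icc (-1:ℝ) 1 := by
      rw [Metric.mem_ball, Real.dist_eq, sub_zero] at hx
      exact ⟨by linarith [abs_lt.mp hx |>.1], le_of_lt (abs_lt.mp hx).2⟩
    exact hK (x, t) ⟨hx1, hIoc ht⟩
  have h_diff : ∀ᵐ t ∂μ, ∀ x ∈ Metric.ball (0:ℝ) 1,
      HasDerivAt (fun y => F y t) (G x t) x := by
    rw [hμdef, ae_restrict_iff' measurableSet_Ioc]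
    exact ae_of_all _ (fun t ht x _ => hFderiv x t (hIoc ht))
  have hder : HasDerivAt (fun x : ℝ => ∫ t, F x t ∂μ) (∫ t, G 0 t ∂μ) 0 :=
    (hasDerivAt_integral_of_dominated_loc_of_deriv_le (𝕜 := ℝ) (E := ℝ) (Metric.ball_mem_nhds 0 one_pos)
      (Filter.Eventually.of_forall hFmeas) hFint (hGmeas 0) h_bound hboundint h_diff).2
  -- identify the function
  have hfun : (fun x : ℝ => ∫ t in (0:ℝ)..T,
      (β t + x * ξ t) * gammaFn σv σ (fun s => β s + x * ξ s) t)
      = fun x : ℝ => ∫ t, F x t ∂μ := by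
    funext x
    rw [hμdef, ← intervalIntegral.integral_of_le hT.le]
    exact intervalIntegral.integral_congr (fun t _ => hFeq x t)
  -- continuity facts on [0, T]
  have hD0c : Continuous (fun t => D 0 t) := hDcont.comp (Continuous.prodMk_right 0)
  have hγAt : ∀ t ∈ Set.Icc (0:ℝ) T, ContinuousAt (gammaFn σv σ β) t := by
    intro t ht
    have hcg : ContinuousAt (fun t => σv ^ 2 / D 0 t) t :=
      (continuousAt_const.div hD0c.continuousAt (hDpos 0 t ht).ne')
    have hfg : gammaFn σv σ β = fun t => σv ^ 2 / D 0 t := funext hgamma0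
    rw [hfg]
    exact hcg
  obtain ⟨h, hhdef⟩ : ∃ h : ℝ → ℝ, h = fun s => (gammaFn σv σ β s) ^ 2 * β s := ⟨_, rfl⟩
  have hhAt : ∀ t ∈ Set.Icc (0:ℝ) T, ContinuousAt h t := by
    intro t ht
    rw [hhdef]
    exact ((hγAt t ht).pow 2).mul hβ.continuousAt
  have hhOn : ∀ {s : Set ℝ}, s ⊆ Set.Icc 0 T → ContinuousOn h s :=
    fun hs => fun t ht => (hhAt t (hs ht)).continuousWithinAt
  have hhmeas : Measurable h := by
    have hg : Measurable (gammaFn σv σ β) := by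
      have hfg : (gammaFn σv σ β) = fun t => σv ^ 2 / D 0 t := funext hgamma0
      rw [hfg]
      exact measurable_const.div hD0c.measurable
    rw [hhdef]
    exact (hg.pow_const 2).mul hβ.measurable
  have huIcc : Set.uIcc (0:ℝ) T = Set.Icc 0 T := Set.uIcc_of_le hT.le
  -- V and its derivative
  obtain ⟨V, hVdef⟩ : ∃ V : ℝ → ℝ, V = fun t => ∫ s in t..T, h s := ⟨_, rfl⟩
  have hVT : V T = 0 := by rw [hVdef]; simp
  have hVd : ∀ t ∈ Set.Icc (0:ℝ) T, HasDerivAt V (-(h t)) t := by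
    intro t ht
    have hsub : Set.uIcc T t ⊆ Set.Icc 0 T :=
      Set.uIcc_subset_Icc (Set.right_mem_Icc.mpr hT.le) ht
    have hw : HasDerivAt (fun u => ∫ s in T..u, h s) (h t) t :=
      integral_hasDerivAt_right ((hhOn hsub).intervalIntegrable)
        hhmeas.stronglyMeasurable.stronglyMeasurableAtFilter (hhAt t ht)
    have hVeq : V = fun u => -(∫ s in T..u, h s) := by
      funext u
      rw [hVdef]
      exact intervalIntegral.integral_symm T u
    rw [hVeq]
    exact hw.neg
  have hVAt : ∀ t ∈ Set.Icc (0:ℝ) T, ContinuousAt V t := fun t ht => (hVd t ht).continuousAt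
  -- integration by parts
  have hibp : (∫ t in (0:ℝ)..T, B t * (-(h t)))
      = B T * V T - B 0 * V 0 - ∫ t in (0:ℝ)..T, (β t * ξ t / (σ t) ^ 2) * V t := by
    apply intervalIntegral.integral_mul_deriv_eq_deriv_mul
    · intro t _
      exact hBd t
    · intro t htm
      rw [huIcc] at htm
      exact hVd t htm
    · exact hb.intervalIntegrable 0 T
    · apply ContinuousOn.intervalIntegrable
      rw [huIcc]
      intro t ht
      exact ((hhAt t ht).continuousWithinAt).neg
  -- swap identity from IBP
  have e1 : (∫ t in (0:ℝ)..T, B t * (-(h t))) = -∫ t in (0:ℝ)..T, B t * h t := by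
    simp [mul_neg, intervalIntegral.integral_neg]
  have hswap : (∫ t in (0:ℝ)..T, B t * h t)
      = ∫ t in (0:ℝ)..T, (β t * ξ t / (σ t) ^ 2) * V t := by
    rw [e1, hB0, hVT] at hibp
    simp only [mul_zero, zero_mul, zero_sub] at hibp
    linarith
  -- integrability pieces
  have i1 : IntervalIntegrable (fun t => ξ t * gammaFn σv σ β t) volume 0 T := by
    apply ContinuousOn.intervalIntegrable
    rw [huIcc]
    exact fun t ht => (hξ.continuousAt.mul (hγAt t ht)).continuousWithinAt
  have i2 : IntervalIntegrable (fun t => 2 * (B t * h t)) volume 0 T := by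
    apply ContinuousOn.intervalIntegrable
    rw [huIcc]
    exact fun t ht =>
      (continuousAt_const.mul (hBc.continuousAt.mul (hhAt t ht))).continuousWithinAt
  have i3 : IntervalIntegrable (fun t => 2 * ((β t * ξ t / (σ t) ^ 2) * V t)) volume 0 T := by
    apply ContinuousOn.intervalIntegrable
    rw [huIcc]
    exact fun t ht =>
      (continuousAt_const.mul (hb.continuousAt.mul (hVAt t ht))).continuousWithinAt
  -- pointwise formula for G 0
  have hptwise : ∀ t ∈ Set.Icc (0:ℝ) T,
      G 0 t = ξ t * gammaFn σv σ β t - 2 * (B t * h t) := by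
    intro t ht
    have hd := (hDpos 0 t ht).ne'
    have hht : h t = gammaFn σv σ β t ^ 2 * β t := by rw [hhdef]
    have hG0t : G 0 t
        = (ξ t * σv ^ 2 * D 0 t - β t * σv ^ 2 * (σv ^ 2 * (2 * B t))) / (D 0 t) ^ 2 := by
      rw [hGdef]
      norm_num
    rw [hG0t, hht, hgamma0]
    field_simp
  have hVt : ∀ t : ℝ, (∫ s in t..T, (gammaFn σv σ β s) ^ 2 * β s) = V t := by
    intro t
    rw [hVdef, hhdef]
  -- value identification
  have hval : (∫ t, G 0 t ∂μ)
      = ∫ t in (0:ℝ)..T,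
        (gammaFn σv σ β t
          - (2 * β t / (σ t) ^ 2) * ∫ s in t..T, (gammaFn σv σ β s) ^ 2 * β s) * ξ t := by
    calc (∫ t, G 0 t ∂μ) = ∫ t in (0:ℝ)..T, G 0 t := by
          rw [hμdef]
          exact (intervalIntegral.integral_of_le hT.le).symm
      _ = ∫ t in (0:ℝ)..T, (ξ t * gammaFn σv σ β t - 2 * (B t * h t)) := by
          apply intervalIntegral.integral_congr
          rw [huIcc]
          exact hptwise
      _ = (∫ t in (0:ℝ)..T, ξ t * gammaFn σv σ β t)
            - ∫ t in (0:ℝ)..T, 2 * (B t * h t) :=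
          intervalIntegral.integral_sub i1 i2
      _ = (∫ t in (0:ℝ)..T, ξ t * gammaFn σv σ β t)
            - ∫ t in (0:ℝ)..T, 2 * ((β t * ξ t / (σ t) ^ 2) * V t) := by
          rw [intervalIntegral.integral_const_mul, intervalIntegral.integral_const_mul, hswap]
      _ = ∫ t in (0:ℝ)..T,
            (ξ t * gammaFn σv σ β t - 2 * ((β t * ξ t / (σ t) ^ 2) * V t)) :=
          (intervalIntegral.integral_sub i1 i3).symm
      _ = _ := by
          apply intervalIntegral.integral_congr
          intro t _
          simp only
          rw [hVt t]
          ring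
  rw [hfun, ← hval]
  exact hder

/-- the Gateaux derivative of `x ↦ ∫₀ᵀ (β_t + x ξ_t) γ_t(β + xξ) dt`
at `x = 0` equals `∫₀ᵀ ( γ_t(β) − (2β_t/σ_t²)·∫_t^T γ_s(β)² β_s ds ) ξ_t dt`. -/
theorem gateaux_derivative_gamma_part
    (T σv : ℝ) (hT : 0 < T) (hσv : 0 < σv)
    (σ : ℝ → ℝ) (hσc : ContinuousOn σ (Set.Icc 0 T))
    (hσpos : ∀ t ∈ Set.Icc (0:ℝ) T, 0 < σ t)
    (β ξ : ℝ → ℝ) (hβ : ContDiffOn ℝ 1 β (Set.Icc 0 T))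
    (hξ : ContDiffOn ℝ 1 ξ (Set.Icc 0 T)) :
    HasDerivAt
      (fun x : ℝ => ∫ t in (0:ℝ)..T,
        (β t + x * ξ t) * gammaFn σv σ (fun s => β s + x * ξ s) t)
      (∫ t in (0:ℝ)..T,
        (gammaFn σv σ β t
          - (2 * β t / (σ t) ^ 2) * ∫ s in t..T, (gammaFn σv σ β s) ^ 2 * β s) * ξ t)
      0 := by
  -- clamp to [0, T]
  obtain ⟨c, hcdef⟩ : ∃ c : ℝ → ℝ, c = fun t => min (max t 0) T := ⟨_, rfl⟩
  have hc : Continuous c := by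
    rw [hcdef]; exact (continuous_id.max continuous_const).min continuous_const
  have hcmem : ∀ t, c t ∈ Set.Icc (0:ℝ) T := by
    intro t
    rw [hcdef]
    exact ⟨le_min (le_max_right t 0) hT.le, min_le_right _ _⟩
  have hcid : ∀ t ∈ Set.Icc (0:ℝ) T, c t = t := by
    intro t ht
    rw [hcdef]
    simp only
    rw [max_eq_left ht.1, min_eq_left ht.2]
  set σ' : ℝ → ℝ := fun t => σ (c t) with hσ'def
  set β' : ℝ → ℝ := fun t => β (c t) with hβ'def
  set ξ' : ℝ → ℝ := fun t => ξ (c t) with hξ'def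
  have hσ' : Continuous σ' := hσc.comp_continuous hc hcmem
  have hσ'pos : ∀ t, 0 < σ' t := fun t => hσpos _ (hcmem t)
  have hβ' : Continuous β' := hβ.continuousOn.comp_continuous hc hcmem
  have hξ' : Continuous ξ' := hξ.continuousOn.comp_continuous hc hcmem
  have eqσ : ∀ t ∈ Set.Icc (0:ℝ) T, σ' t = σ t := fun t ht => by rw [hσ'def]; simp [hcid t ht]
  have eqβ : ∀ t ∈ Set.Icc (0:ℝ) T, β' t = β t := fun t ht => by rw [hβ'def]; simp [hcid t ht]
  have eqξ : ∀ t ∈ Set.Icc (0:ℝ) T, ξ' t = ξ t := fun t ht => by rw [hξ'def]; simp [hcid t ht]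
  have H := gdg_main T σv hT hσv σ' β' ξ' hσ' hσ'pos hβ' hξ'
  -- congruence of gammaFn
  have h1 : ∀ (x : ℝ), ∀ t ∈ Set.Icc (0:ℝ) T,
      gammaFn σv σ' (fun s => β' s + x * ξ' s) t
        = gammaFn σv σ (fun s => β s + x * ξ s) t := by
    intro x t ht
    have hsub : Set.uIcc (0:ℝ) t ⊆ Set.Icc 0 T :=
      Set.uIcc_subset_Icc (Set.left_mem_Icc.mpr hT.le) ht
    have hint : (∫ s in (0:ℝ)..t, ((β' s + x * ξ' s) / σ' s) ^ 2)
        = ∫ s in (0:ℝ)..t, ((β s + x * ξ s) / σ s) ^ 2 := by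
      apply intervalIntegral.integral_congr
      intro s hs
      have hs' := hsub hs
      simp only [eqβ s hs', eqξ s hs', eqσ s hs']
    rw [gammaFn, gammaFn, hint]
  have h0 : ∀ t ∈ Set.Icc (0:ℝ) T, gammaFn σv σ' β' t = gammaFn σv σ β t := by
    intro t ht
    have hsub : Set.uIcc (0:ℝ) t ⊆ Set.Icc 0 T :=
      Set.uIcc_subset_Icc (Set.left_mem_Icc.mpr hT.le) ht
    have hint : (∫ s in (0:ℝ)..t, (β' s / σ' s) ^ 2)
        = ∫ s in (0:ℝ)..t, (β s / σ s) ^ 2 := by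
      apply intervalIntegral.integral_congr
      intro s hs
      have hs' := hsub hs
      simp only [eqβ s hs', eqσ s hs']
    rw [gammaFn, gammaFn, hint]
  have huIcc : Set.uIcc (0:ℝ) T = Set.Icc 0 T := Set.uIcc_of_le hT.le
  -- transfer the function
  have hfun2 : (fun x : ℝ => ∫ t in (0:ℝ)..T,
        (β' t + x * ξ' t) * gammaFn σv σ' (fun s => β' s + x * ξ' s) t)
      = fun x : ℝ => ∫ t in (0:ℝ)..T,
        (β t + x * ξ t) * gammaFn σv σ (fun s => β s + x * ξ s) t := by
    funext x
    apply intervalIntegral.integral_congr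
    intro t ht
    rw [huIcc] at ht
    simp only
    rw [eqβ t ht, eqξ t ht, h1 x t ht]
  -- transfer the value
  have hval2 : (∫ t in (0:ℝ)..T,
        (gammaFn σv σ' β' t
          - (2 * β' t / (σ' t) ^ 2) * ∫ s in t..T, (gammaFn σv σ' β' s) ^ 2 * β' s) * ξ' t)
      = ∫ t in (0:ℝ)..T,
        (gammaFn σv σ β t
          - (2 * β t / (σ t) ^ 2) * ∫ s in t..T, (gammaFn σv σ β s) ^ 2 * β s) * ξ t := by
    apply intervalIntegral.integral_congr
    intro t ht
    rw [huIcc] at ht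
    have hsub : Set.uIcc t T ⊆ Set.Icc 0 T :=
      Set.uIcc_subset_Icc ht (Set.right_mem_Icc.mpr hT.le)
    have hinner : (∫ s in t..T, (gammaFn σv σ' β' s) ^ 2 * β' s)
        = ∫ s in t..T, (gammaFn σv σ β s) ^ 2 * β s := by
      apply intervalIntegral.integral_congr
      intro s hs
      have hs' := hsub hs
      simp only [h0 s hs', eqβ s hs']
    simp only
    rw [hinner, h0 t ht, eqβ t ht, eqξ t ht, eqσ t ht]
  rw [hfun2, hval2] at H
  exact H
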